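/- If G is a connected simple graph which is neither a path nor an extended star graph, then for every k ≥ 1, G is circularly k-partite if and only if k divides χᵒ(G), where χᵒ(G) is the largest k for which G is circularly k-partite. -/

import Mathlib

open SimpleGraph Function

/-- A circular `k`-colouring of the oriented edges of `G`: every colour class is nonempty
(on adjacent pairs), and the colour increases by one along every non-backtracking step. -/
def IsCircularColoring {V : Type*} (G : SimpleGraph V) (k : ℕ) (c : V → V → ZMod k) : Prop :=
  (∀ j : ZMod k, ∃ v w, G.Adj v w ∧ c v w = j) ∧
  ∀ v w z, G.Adj v w → G.Adj w z → z ≠ v → c w z = c v w + 1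

/-- `G` is circularly `k`-partite. -/
def CircularlyPartite {V : Type*} (G : SimpleGraph V) (k : ℕ) : Prop :=
  0 < k ∧ ∃ c : V → V → ZMod k, IsCircularColoring G k c

/-- The oriented edge periodic colouring number: the largest `k` such that `G` is
circularly `k`-partite. -/
noncomputable def chiO {V : Type*} (G : SimpleGraph V) : ℕ :=
  sSup {k | CircularlyPartite G k}

/-- `G` is a path graph. -/
def IsPathGraph {V : Type*} (G : SimpleGraph V) : Prop :=
  ∃ n, Nonempty (G ≃g pathGraph n)

/-- `G` is an extended star graph: a tree with exactly one vertex of degree at least 3. -/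
def IsExtendedStar {V : Type*} [Fintype V] (G : SimpleGraph V) [DecidableRel G.Adj] : Prop :=
  G.IsTree ∧ ∃! v : V, 3 ≤ G.degree v

/-- A (not necessarily proper) vertex colouring is `t`-periodic if every path of length `t`
has endpoints of the same colour. -/
def IsPeriodicColoring {V : Type*} (G : SimpleGraph V) (t : ℕ) {α : Type*} (c : V → α) : Prop :=
  ∀ (u v : V) (p : G.Walk u v), p.IsPath → p.length = t → c u = c v

/-- The vertex `t`-periodic colouring number: the largest `k` such that `G` admits a
`t`-periodic colouring using exactly `k` colours. -/
noncomputable def chiT {V : Type*} (G : SimpleGraph V) (t : ℕ) : ℕ :=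
  sSup {k | ∃ c : V → Fin k, Surjective c ∧ IsPeriodicColoring G t c}

/-- A proper edge colouring: distinct edges sharing an endpoint get distinct colours. -/
def IsProperEdgeColoring {V : Type*} (G : SimpleGraph V) {α : Type*} (c : G.edgeSet → α) : Prop :=
  ∀ e f : G.edgeSet, e ≠ f → (∃ v, v ∈ (e : Sym2 V) ∧ v ∈ (f : Sym2 V)) → c e ≠ c f

/-- The edge chromatic number of `G`. -/
noncomputable def chiStar {V : Type*} (G : SimpleGraph V) : ℕ :=
  sInf {k | ∃ c : G.edgeSet → Fin k, IsProperEdgeColoring G c}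

namespace CircAux

variable {V : Type*} {G : SimpleGraph V}

/-- Oriented edges of `G`. -/
abbrev OE (G : SimpleGraph V) := {p : V × V // G.Adj p.1 p.2}

/-- A non-backtracking step between oriented edges. -/
def RStep (G : SimpleGraph V) (e f : OE G) : Prop :=
  e.1.2 = f.1.1 ∧ f.1.2 ≠ e.1.1

/-- Reachability in the non-backtracking oriented-edge graph, with signed shift. -/
inductive Reach (G : SimpleGraph V) : OE G → OE G → ℤ → Prop
  | refl (e : OE G) : Reach G e e 0
  | fwd {e f g : OE G} {t : ℤ} : Reach G e f t → RStep G f g → Reach G e g (t + 1)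
  | bwd {e f g : OE G} {t : ℤ} : Reach G e f t → RStep G g f → Reach G e g (t - 1)

lemma Reach.trans' {e f g : OE G} {s t : ℤ} (h1 : Reach G e f s) (h2 : Reach G f g t) :
    Reach G e g (s + t) := by
  induction h2 with
  | refl => simpa using h1
  | fwd h r ih => rw [← add_assoc]; exact ih.fwd r
  | bwd h r ih => rw [← add_sub_assoc]; exact ih.bwd r

lemma Reach.symm' {e f : OE G} {t : ℤ} (h : Reach G e f t) : Reach G f e (-t) := by
  induction h with
  | refl => simpa using Reach.refl _
  | @fwd f' g' t' h r ih =>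
      have h1 : Reach G g' f' (-1) := by simpa using (Reach.refl g').bwd r
      have h2 := h1.trans' ih
      have : -1 + -t' = -(t' + 1) := by ring
      rwa [this] at h2
  | @bwd f' g' t' h r ih =>
      have h1 : Reach G g' f' 1 := by simpa using (Reach.refl g').fwd r
      have h2 := h1.trans' ih
      have : 1 + -t' = -(t' - 1) := by ring
      rwa [this] at h2

lemma reach_color {k : ℕ} {c : V → V → ZMod k}
    (hc : ∀ v w z, G.Adj v w → G.Adj w z → z ≠ v → c w z = c v w + 1)
    {e f : OE G} {t : ℤ} (h : Reach G e f t) :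
    c f.1.1 f.1.2 = c e.1.1 e.1.2 + (t : ZMod k) := by
  induction h with
  | refl => simp
  | @fwd f' g' t' h r ih =>
      obtain ⟨r1, r2⟩ := r
      have adj2 : G.Adj f'.1.2 g'.1.2 := by rw [r1]; exact g'.2
      have key := hc f'.1.1 f'.1.2 g'.1.2 f'.2 adj2 r2
      rw [← r1, key, ih]; push_cast; ring
  | @bwd f' g' t' h r ih =>
      obtain ⟨r1, r2⟩ := r
      have adj2 : G.Adj g'.1.2 f'.1.2 := by rw [r1]; exact f'.2
      have key := hc g'.1.1 g'.1.2 f'.1.2 g'.2 adj2 r2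
      nth_rewrite 1 [r1] at key
      rw [ih] at key
      push_cast
      linear_combination -key

lemma reach_exists_between {x y : OE G} {T : ℤ} (h : Reach G x y T) :
    ∀ s : ℤ, 0 ≤ s → s ≤ T → ∃ z, Reach G x z s := by
  induction h with
  | refl =>
      intro s h0 h1
      have : s = 0 := by omega
      subst this
      exact ⟨x, Reach.refl x⟩
  | @fwd f' g' t' h r ih =>
      intro s h0 h1
      rcases le_or_gt s t' with hle | hgt
      · exact ih s h0 hle
      · have hs : s = t' + 1 := by omega
        subst hs
        exact ⟨g', h.fwd r⟩
  | @bwd f' g' t' h r ih =>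
      intro s h0 h1
      exact ih s h0 (by omega)

/-- The setoid of mutual reachability on oriented edges. -/
def reachSetoid (G : SimpleGraph V) : Setoid (OE G) :=
  ⟨fun e f => ∃ t, Reach G e f t,
    fun e => ⟨0, Reach.refl e⟩,
    fun ⟨t, h⟩ => ⟨-t, h.symm'⟩,
    fun ⟨t, h⟩ ⟨t', h'⟩ => ⟨t + t', h.trans' h'⟩⟩

noncomputable def anchor (G : SimpleGraph V) (e : OE G) : OE G :=
  (Quotient.mk (reachSetoid G) e).out

lemma anchor_reach (e : OE G) : ∃ t, Reach G (anchor G e) e t :=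
  Quotient.exact (Quotient.out_eq (Quotient.mk (reachSetoid G) e))

lemma anchor_eq_of_reach {e f : OE G} {t : ℤ} (h : Reach G e f t) :
    anchor G e = anchor G f :=
  congrArg Quotient.out (Quotient.sound ⟨t, h⟩)

lemma dvd_of_colorings {a : ℕ} {c : V → V → ZMod a}
    (hca : IsCircularColoring G a c) {x y : OE G} {s s' : ℤ}
    (h : Reach G x y s) (h' : Reach G x y s') : (a : ℤ) ∣ s - s' := by
  have e1 := reach_color hca.2 h
  have e2 := reach_color hca.2 h'
  rw [e1] at e2
  have : ((s : ZMod a)) = (s' : ZMod a) := by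
    exact add_left_cancel e2
  rw [← sub_eq_zero] at this
  rw [← ZMod.intCast_zmod_eq_zero_iff_dvd]
  push_cast
  exact this

lemma partite_lcm {a b : ℕ} (ha : CircularlyPartite G a) (hb : CircularlyPartite G b)
    {e0 : OE G} {d : ℤ} (hd : 0 < d) (hcl : Reach G e0 e0 d) :
    CircularlyPartite G (Nat.lcm a b) := by
  obtain ⟨hapos, ca, hca⟩ := ha
  obtain ⟨hbpos, cb, hcb⟩ := hb
  set m := Nat.lcm a b with hm
  have hmpos : 0 < m := Nat.lcm_pos hapos hbpos
  haveI : NeZero m := ⟨hmpos.ne'⟩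
  -- uniqueness of shifts mod m
  have uniq : ∀ (x y : OE G) (s s' : ℤ), Reach G x y s → Reach G x y s' →
      ((s : ZMod m)) = (s' : ZMod m) := by
    intro x y s s' h h'
    have hA := dvd_of_colorings hca h h'
    have hB := dvd_of_colorings hcb h h'
    have hM : (m : ℤ) ∣ s - s' := by
      have := Int.dvd_natAbs.mp (Int.natCast_dvd_natCast.mpr (Int.lcm_dvd (Int.dvd_natAbs.mpr hA) (Int.dvd_natAbs.mpr hB)))
      have hlcm : Int.lcm (a : ℤ) (b : ℤ) = m := by
        simp [Int.lcm, hm]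
      rwa [hlcm] at this
    rw [← sub_eq_zero]
    have := (ZMod.intCast_zmod_eq_zero_iff_dvd (s - s') m).mpr hM
    push_cast at this
    exact this
  have hmd : (m : ℤ) ∣ d := by
    have hA : (a : ℤ) ∣ d := by
      have := dvd_of_colorings hca hcl (Reach.refl e0)
      simpa using this
    have hB : (b : ℤ) ∣ d := by
      have := dvd_of_colorings hcb hcl (Reach.refl e0)
      simpa using this
    have := Int.dvd_natAbs.mp (Int.natCast_dvd_natCast.mpr (Int.lcm_dvd (Int.dvd_natAbs.mpr hA) (Int.dvd_natAbs.mpr hB)))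
    have hlcm : Int.lcm (a : ℤ) (b : ℤ) = m := by simp [Int.lcm, hm]
    rwa [hlcm] at this
  have hmled : (m : ℤ) ≤ d := Int.le_of_dvd hd hmd
  -- the colouring
  have hanch : ∀ e : OE G, ∃ t, Reach G (anchor G e) e t := anchor_reach
  classical
  let cE : OE G → ℤ := fun e => Classical.choose (hanch e)
  have cE_spec : ∀ e, Reach G (anchor G e) e (cE e) := fun e => Classical.choose_spec (hanch e)
  let c : V → V → ZMod m := fun v w =>
    if h : G.Adj v w then ((cE ⟨(v, w), h⟩ : ℤ) : ZMod m) else 0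
  have hcval : ∀ e : OE G, c e.1.1 e.1.2 = ((cE e : ℤ) : ZMod m) := by
    intro e
    have : (⟨(e.1.1, e.1.2), e.2⟩ : OE G) = e := by
      apply Subtype.ext; simp
    simp only [c, dif_pos e.2, this]
  refine ⟨hmpos, c, ?_, ?_⟩
  · -- surjectivity of colour classes
    intro j
    set β := anchor G e0 with hβ
    set u := cE e0 with hu
    have spec0 : Reach G β e0 u := cE_spec e0
    set s : ℕ := (j - ((u : ℤ) : ZMod m)).val with hs
    have hslt : (s : ℤ) < (m : ℤ) := by
      exact_mod_cast ZMod.val_lt _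
    obtain ⟨eS, heS⟩ := reach_exists_between hcl (s : ℤ) (by positivity) (by omega)
    have hreach2 : Reach G β eS (u + s) := spec0.trans' heS
    have hanch2 : anchor G eS = β := (anchor_eq_of_reach heS).symm
    have hval : ((cE eS : ℤ) : ZMod m) = ((u + s : ℤ) : ZMod m) := by
      apply uniq β eS
      · rw [← hanch2]; exact cE_spec eS
      · exact hreach2
    refine ⟨eS.1.1, eS.1.2, eS.2, ?_⟩
    rw [hcval eS, hval]
    push_cast
    have : ((s : ℕ) : ZMod m) = j - ((u : ℤ) : ZMod m) := by
      rw [hs]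
      exact ZMod.natCast_rightInverse _
    rw [this]
    ring
  · -- increment condition
    intro v w z h1 h2 h3
    set e : OE G := ⟨(v, w), h1⟩ with he
    set f : OE G := ⟨(w, z), h2⟩ with hf
    have step : RStep G e f := ⟨rfl, h3⟩
    have r_ef : Reach G e f (0 + 1) := (Reach.refl e).fwd step
    have anch : anchor G e = anchor G f := anchor_eq_of_reach r_ef
    have hre : Reach G (anchor G f) f (cE e + 1) := by
      rw [← anch]
      exact (cE_spec e).fwd step
    have hval := uniq (anchor G f) f (cE f) (cE e + 1) (cE_spec f) hre
    have hv : c v w = ((cE e : ℤ) : ZMod m) := hcval e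
    have hw : c w z = ((cE f : ℤ) : ZMod m) := hcval f
    rw [hv, hw, hval]
    push_cast
    ring

lemma getVert_inj {u v : V} (p : G.Walk u v) (hp : p.IsPath) :
    ∀ i j, i ≤ p.length → j ≤ p.length → p.getVert i = p.getVert j → i = j := by
  induction p with
  | nil => intro i j hi hj _; simp only [Walk.length_nil, Nat.le_zero] at hi hj; omega
  | @cons u' v' w' h q ih =>
    rw [Walk.cons_isPath_iff] at hp
    intro i j hi hj hij
    simp only [Walk.length_cons] at hi hj
    match i, j with
    | 0, 0 => rfl
    | 0, j + 1 =>
        exfalso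
        apply hp.2
        rw [Walk.mem_support_iff_exists_getVert]
        refine ⟨j, ?_, by omega⟩
        have h1 : (Walk.cons h q).getVert 0 = u' := Walk.getVert_zero _
        have h2 : (Walk.cons h q).getVert (j + 1) = q.getVert j := Walk.getVert_cons_succ _ _
        rw [h1, h2] at hij
        exact hij.symm
    | i + 1, 0 =>
        exfalso
        apply hp.2
        rw [Walk.mem_support_iff_exists_getVert]
        refine ⟨i, ?_, by omega⟩
        have h1 : (Walk.cons h q).getVert 0 = u' := Walk.getVert_zero _
        have h2 : (Walk.cons h q).getVert (i + 1) = q.getVert i := Walk.getVert_cons_succ _ _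
        rw [h1, h2] at hij
        exact hij
    | i + 1, j + 1 =>
        have h2 : (Walk.cons h q).getVert (i + 1) = q.getVert i := Walk.getVert_cons_succ _ _
        have h3 : (Walk.cons h q).getVert (j + 1) = q.getVert j := Walk.getVert_cons_succ _ _
        rw [h2, h3] at hij
        have := ih hp.1 i j (by omega) (by omega) hij
        omega

/-- The `i`-th oriented edge of a walk. -/
def pe {u v : V} (p : G.Walk u v) (i : ℕ) (hi : i < p.length) : OE G :=
  ⟨(p.getVert i, p.getVert (i + 1)), p.adj_getVert_succ hi⟩

lemma reach_pe {u v : V} (p : G.Walk u v)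
    (hnb : ∀ i, i + 2 ≤ p.length → p.getVert (i + 2) ≠ p.getVert i) :
    ∀ j (hj : j < p.length) (h0 : 0 < p.length),
      Reach G (pe p 0 h0) (pe p j hj) (j : ℤ) := by
  intro j
  induction j with
  | zero =>
      intro hj h0
      exact Reach.refl _
  | succ j ih =>
      intro hj h0
      have hj' : j < p.length := by omega
      have step : RStep G (pe p j hj') (pe p (j + 1) hj) := by
        constructor
        · rfl
        · exact hnb j (by omega)
      have := (ih hj' h0).fwd step
      have hcast : ((j : ℤ) + 1) = ((j + 1 : ℕ) : ℤ) := by push_cast; ring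
      rwa [hcast] at this

lemma reach_rev [Fintype V] [DecidableRel G.Adj] (e : OE G) (h3 : 3 ≤ G.degree e.1.2) :
    Reach G e ⟨(e.1.2, e.1.1), e.2.symm⟩ 1 := by
  classical
  obtain ⟨⟨y, w⟩, hyw⟩ := e
  simp only at h3 ⊢
  have hymem : y ∈ G.neighborFinset w := by
    rw [SimpleGraph.mem_neighborFinset]; exact hyw.symm
  have hcard : 2 ≤ ((G.neighborFinset w).erase y).card := by
    have := Finset.card_erase_of_mem hymem
    have hdeg : (G.neighborFinset w).card = G.degree w := rfl
    omega
  obtain ⟨aa, haa, bb, hbb, hab⟩ := Finset.one_lt_card.mp (show 1 < ((G.neighborFinset w).erase y).card by omega)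
  have haa' := Finset.mem_erase.mp haa
  have hbb' := Finset.mem_erase.mp hbb
  have hadj_a : G.Adj w aa := (SimpleGraph.mem_neighborFinset _ _ _).mp haa'.2
  have hadj_b : G.Adj w bb := (SimpleGraph.mem_neighborFinset _ _ _).mp hbb'.2
  have r1 : Reach G ⟨(y, w), hyw⟩ ⟨(w, aa), hadj_a⟩ (0 + 1) :=
    (Reach.refl _).fwd ⟨rfl, haa'.1⟩
  have r2 : Reach G ⟨(y, w), hyw⟩ ⟨(bb, w), hadj_b.symm⟩ (0 + 1 - 1) :=
    r1.bwd ⟨rfl, by exact hab⟩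
  have r3 : Reach G ⟨(y, w), hyw⟩ ⟨(w, y), hyw.symm⟩ (0 + 1 - 1 + 1) :=
    r2.fwd ⟨rfl, by exact fun hh => hbb'.1 hh.symm⟩
  have : ((0 : ℤ) + 1 - 1 + 1) = 1 := by ring
  rwa [this] at r3

lemma exists_closed_of_cycle {v : V} {p : G.Walk v v} (hp : p.IsCycle) :
    ∃ (e0 : OE G) (d : ℤ), 0 < d ∧ Reach G e0 e0 d := by
  have hL3 : 3 ≤ p.length := hp.three_le_length
  cases p with
  | nil => exact absurd hp Walk.IsCycle.not_of_nil
  | @cons _ x _ hadj q =>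
    have hq : q.IsPath := ((Walk.cons_isCycle_iff q hadj).mp hp).1
    set P := Walk.cons hadj q with hP
    have hlen : P.length = q.length + 1 := Walk.length_cons _ _
    set n := q.length with hn
    have hn2 : 2 ≤ n := by
      rw [hlen] at hL3; omega
    have inj := getVert_inj q hq
    have hgv : ∀ i, P.getVert (i + 1) = q.getVert i := fun i => Walk.getVert_cons_succ _ _
    have hgv0 : P.getVert 0 = v := Walk.getVert_zero _
    have hqend : q.getVert n = v := Walk.getVert_length _
    have hnb : ∀ i, i + 2 ≤ P.length → P.getVert (i + 2) ≠ P.getVert i := by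
      intro i hi heq
      rw [hlen] at hi
      match i with
      | 0 =>
          rw [hgv0] at heq
          rw [show (2 : ℕ) = 1 + 1 from rfl, hgv 1] at heq
          have := inj 1 n (by omega) (le_refl n) (by rw [heq, hqend])
          omega
      | i + 1 =>
          rw [hgv (i + 2), hgv i] at heq
          have := inj (i + 2) i (by omega) (by omega) heq
          omega
    have h0 : 0 < P.length := by omega
    have hjn : n < P.length := by omega
    have r := reach_pe P hnb n hjn h0
    have hclose : RStep G (pe P n hjn) (pe P 0 h0) := by
      constructor
      · show P.getVert (n + 1) = P.getVert 0
        rw [hgv0, ← hlen]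
        exact Walk.getVert_length _
      · show P.getVert 1 ≠ P.getVert n
        intro heq
        rw [hgv 0] at heq
        have hne : n = (n - 1) + 1 := by omega
        rw [hne, hgv (n - 1)] at heq
        have := inj 0 (n - 1) (by omega) (by omega) heq
        omega
    have rfinal := r.fwd hclose
    exact ⟨pe P 0 h0, (n : ℤ) + 1, by positivity, rfinal⟩

lemma exists_closed_two_branch [Fintype V] [DecidableRel G.Adj] (hG : G.Connected)
    {u v : V} (huv : u ≠ v) (hu : 3 ≤ G.degree u) (hv : 3 ≤ G.degree v) :
    ∃ (e0 : OE G) (d : ℤ), 0 < d ∧ Reach G e0 e0 d := by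
  classical
  obtain ⟨p0⟩ := hG.preconnected u v
  set p : G.Walk u v := (p0.toPath : G.Walk u v) with hpdef
  have hp : p.IsPath := p0.toPath.2
  set L := p.length with hL
  have hL1 : 1 ≤ L := by
    by_contra hcon
    have hzero : L = 0 := by omega
    apply huv
    have h1 : p.getVert 0 = u := Walk.getVert_zero _
    have h2 : p.getVert L = v := by rw [hL]; exact Walk.getVert_length _
    rw [hzero] at h2
    exact h1.symm.trans h2
  have inj := getVert_inj p hp
  have hnb : ∀ i, i + 2 ≤ p.length → p.getVert (i + 2) ≠ p.getVert i := by
    intro i hi heq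
    have := inj (i + 2) i (by omega) (by omega) heq
    omega
  have h0 : 0 < p.length := hL1
  have hjL : L - 1 < p.length := by omega
  have r1 : Reach G (pe p 0 h0) (pe p (L - 1) hjL) ((L - 1 : ℕ) : ℤ) := reach_pe p hnb _ _ _
  have hpe2 : (pe p (L - 1) hjL).1.2 = v := by
    show p.getVert (L - 1 + 1) = v
    rw [show L - 1 + 1 = L by omega, hL]
    exact Walk.getVert_length _
  have r2 : Reach G (pe p (L - 1) hjL)
      ⟨((pe p (L - 1) hjL).1.2, (pe p (L - 1) hjL).1.1), (pe p (L - 1) hjL).2.symm⟩ 1 :=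
    reach_rev _ (by rw [hpe2]; exact hv)
  -- the reverse walk
  have hpr : p.reverse.IsPath := hp.reverse
  have hLr : p.reverse.length = L := by rw [Walk.length_reverse, hL]
  have injr := getVert_inj p.reverse hpr
  have hnbr : ∀ i, i + 2 ≤ p.reverse.length → p.reverse.getVert (i + 2) ≠ p.reverse.getVert i := by
    intro i hi heq
    have := injr (i + 2) i (by omega) (by omega) heq
    omega
  have h0r : 0 < p.reverse.length := by omega
  have hjLr : L - 1 < p.reverse.length := by omega
  have r3 : Reach G (pe p.reverse 0 h0r) (pe p.reverse (L - 1) hjLr) ((L - 1 : ℕ) : ℤ) :=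
    reach_pe p.reverse hnbr _ _ _
  have key1 : (⟨((pe p (L - 1) hjL).1.2, (pe p (L - 1) hjL).1.1), (pe p (L - 1) hjL).2.symm⟩ : OE G)
      = pe p.reverse 0 h0r := by
    apply Subtype.ext
    show (p.getVert (L - 1 + 1), p.getVert (L - 1)) = (p.reverse.getVert 0, p.reverse.getVert (0 + 1))
    rw [Walk.getVert_reverse, Walk.getVert_reverse]
    rw [show L - 1 + 1 = L by omega]
    rw [show p.length - 0 = L from by omega, show p.length - (0 + 1) = L - 1 from by omega]
  rw [key1] at r2
  -- reversal at u
  have hpe4 : (pe p.reverse (L - 1) hjLr).1.2 = u := by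
    show p.reverse.getVert (L - 1 + 1) = u
    rw [Walk.getVert_reverse, show L - 1 + 1 = L by omega, show p.length - L = 0 by omega]
    exact Walk.getVert_zero _
  have r4 : Reach G (pe p.reverse (L - 1) hjLr)
      ⟨((pe p.reverse (L - 1) hjLr).1.2, (pe p.reverse (L - 1) hjLr).1.1),
        (pe p.reverse (L - 1) hjLr).2.symm⟩ 1 :=
    reach_rev _ (by rw [hpe4]; exact hu)
  have key2 : (⟨((pe p.reverse (L - 1) hjLr).1.2, (pe p.reverse (L - 1) hjLr).1.1),
      (pe p.reverse (L - 1) hjLr).2.symm⟩ : OE G) = pe p 0 h0 := by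
    apply Subtype.ext
    show (p.reverse.getVert (L - 1 + 1), p.reverse.getVert (L - 1)) = (p.getVert 0, p.getVert (0 + 1))
    rw [Walk.getVert_reverse, Walk.getVert_reverse]
    rw [show L - 1 + 1 = L by omega]
    rw [show p.length - L = 0 from by omega, show p.length - (L - 1) = 0 + 1 from by omega]
  rw [key2] at r4
  have total := r1.trans' (r2.trans' (r3.trans' r4))
  refine ⟨pe p 0 h0, _, ?_, total⟩
  have : (0 : ℤ) ≤ ((L - 1 : ℕ) : ℤ) := by positivity
  omega

lemma cross {S : V → Prop} : ∀ {z x : V} (w : G.Walk z x), ¬ S z → S x →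
    ∃ a b, G.Adj a b ∧ ¬ S a ∧ S b := by
  intro z x w
  induction w with
  | nil => intro h hx; exact absurd hx h
  | @cons z' y' x' h q ih =>
      intro hz hx
      by_cases h2 : S y'
      · exact ⟨z', y', h, hz, h2⟩
      · exact ih h2 hx

lemma mem_edges_getVert : ∀ {u v : V} (p : G.Walk u v) (e : Sym2 V), e ∈ p.edges →
    ∃ i, i < p.length ∧ e = s(p.getVert i, p.getVert (i + 1)) := by
  intro u v p
  induction p with
  | nil => simp
  | @cons u' v' w' h q ih =>
    intro e he
    rw [Walk.edges_cons, List.mem_cons] at he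
    rcases he with rfl | he
    · refine ⟨0, by simp [Walk.length_cons], ?_⟩
      rw [Walk.getVert_zero, show (0 + 1) = 1 from rfl, Walk.getVert_cons_succ, Walk.getVert_zero]
    · obtain ⟨i, hi, hei⟩ := ih e he
      refine ⟨i + 1, by simp [Walk.length_cons]; omega, ?_⟩
      rw [Walk.getVert_cons_succ, Walk.getVert_cons_succ]
      exact hei

lemma isPathGraph_aux [Fintype V] [DecidableRel G.Adj] (hG : G.Connected) (hac : G.IsAcyclic)
    (hdeg : ∀ w, G.degree w ≤ 2) : IsPathGraph G := by
  classical
  have hne : Nonempty V := hG.nonempty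
  set n := Fintype.card V with hn
  set Sl : Set ℕ := {l | ∃ (x y : V) (q : G.Walk x y), q.IsPath ∧ q.length = l} with hSl
  have hSne : Sl.Nonempty := ⟨0, hne.some, hne.some, Walk.nil, Walk.IsPath.nil, rfl⟩
  have hSbdd : BddAbove Sl := by
    refine ⟨n, ?_⟩
    rintro l ⟨x, y, q, hq, rfl⟩
    exact hq.length_lt.le
  obtain ⟨x, y, p, hp, hplen⟩ := Nat.sSup_mem hSne hSbdd
  have hmax : ∀ (x' y' : V) (q : G.Walk x' y'), q.IsPath → q.length ≤ sSup Sl :=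
    fun x' y' q hq => le_csSup hSbdd ⟨x', y', q, hq, rfl⟩
  -- every vertex is on p
  have hall : ∀ z, z ∈ p.support := by
    by_contra hz
    push_neg at hz
    obtain ⟨z, hz⟩ := hz
    obtain ⟨w0⟩ := hG.preconnected z x
    obtain ⟨a, b, hab, ha, hb⟩ := cross (S := fun t => t ∈ p.support) w0 hz p.start_mem_support
    by_cases hbx : b = x
    · subst hbx
      have hpath : (Walk.cons hab p).IsPath := by
        rw [Walk.cons_isPath_iff]; exact ⟨hp, ha⟩
      have hle := hmax _ _ _ hpath
      rw [Walk.length_cons, hplen] at hle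
      omega
    by_cases hby : b = y
    · subst hby
      have hpath : (Walk.cons hab p.reverse).IsPath := by
        rw [Walk.cons_isPath_iff]
        refine ⟨hp.reverse, ?_⟩
        rw [Walk.support_reverse, List.mem_reverse]
        exact ha
      have hle := hmax _ _ _ hpath
      rw [Walk.length_cons, Walk.length_reverse, hplen] at hle
      omega
    -- b is internal: degree at least 3, contradiction
    exfalso
    set q := p.takeUntil b hb with hq
    set r := p.dropUntil b hb with hr
    have hqr : q.append r = p := p.take_spec hb
    have hp' : (q.append r).IsPath := by rw [hqr]; exact hp
    have hnodups := hp'.2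
    rw [Walk.support_append, List.nodup_append] at hnodups
    obtain ⟨hnq, hnrt, hdisj⟩ := hnodups
    have hqnn : q.length ≠ 0 := by
      intro h0
      apply hbx
      have h1 : q.getVert 0 = x := Walk.getVert_zero _
      have h2 : q.getVert q.length = b := Walk.getVert_length _
      rw [h0] at h2
      rw [← h2, h1]
    have hrnn : r.length ≠ 0 := by
      intro h0
      apply hby
      have h1 : r.getVert 0 = b := Walk.getVert_zero _
      have h2 : r.getVert r.length = y := Walk.getVert_length _
      rw [h0, h1] at h2
      exact h2
    have hqrevnn : ¬ q.reverse.Nil := by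
      rw [Walk.nil_iff_length_eq, Walk.length_reverse]; exact hqnn
    have hrnn' : ¬ r.Nil := by rw [Walk.nil_iff_length_eq]; exact hrnn
    set b1 := q.reverse.getVert 1 with hb1
    set b2 := r.getVert 1 with hb2
    have hadj1 : G.Adj b b1 := Walk.adj_snd hqrevnn
    have hadj2 : G.Adj b b2 := Walk.adj_snd hrnn'
    have hb1q : b1 ∈ q.support := by
      have : b1 ∈ q.reverse.support := by
        rw [Walk.mem_support_iff_exists_getVert]
        exact ⟨1, rfl, by rw [Walk.length_reverse]; omega⟩
      rwa [Walk.support_reverse, List.mem_reverse] at this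
    have hb2r : b2 ∈ r.support.tail := by
      have hmem : b2 ∈ r.support := by
        rw [Walk.mem_support_iff_exists_getVert]
        exact ⟨1, rfl, by omega⟩
      have hne2 : b2 ≠ b := hadj2.ne'
      rw [Walk.support_eq_cons] at hmem
      rcases List.mem_cons.mp hmem with h | h
      · exact absurd h hne2
      · exact h
    have hb1b2 : b1 ≠ b2 := by
      intro h
      exact hdisj b1 hb1q b1 (h ▸ hb2r) rfl
    have hb1p : b1 ∈ p.support := by
      rw [← hqr, Walk.support_append, List.mem_append]
      exact Or.inl hb1q
    have hb2p : b2 ∈ p.support := by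
      rw [← hqr, Walk.support_append, List.mem_append]
      exact Or.inr hb2r
    have hab1 : a ≠ b1 := fun h => ha (h ▸ hb1p)
    have hab2 : a ≠ b2 := fun h => ha (h ▸ hb2p)
    have hsub : ({a, b1, b2} : Finset V) ⊆ G.neighborFinset b := by
      intro t ht
      rw [SimpleGraph.mem_neighborFinset]
      rcases Finset.mem_insert.mp ht with rfl | ht
      · exact hab.symm
      rcases Finset.mem_insert.mp ht with rfl | ht
      · exact hadj1
      rw [Finset.mem_singleton] at ht
      subst ht
      exact hadj2
    have hc3 : ({a, b1, b2} : Finset V).card = 3 := by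
      rw [Finset.card_insert_of_notMem (by simp [hab1, hab2]),
        Finset.card_insert_of_notMem (by simp [hb1b2]), Finset.card_singleton]
    have hle3 := Finset.card_le_card hsub
    rw [hc3] at hle3
    have := hdeg b
    rw [SimpleGraph.degree] at this
    omega
  -- p is a spanning path
  have hnodup : p.support.Nodup := hp.2
  have hToF : p.support.toFinset = Finset.univ :=
    Finset.eq_univ_iff_forall.mpr fun z => List.mem_toFinset.mpr (hall z)
  have hsuplen : p.support.length = n := by
    rw [← List.toFinset_card_of_nodup hnodup, hToF, Finset.card_univ]
  have hplen_n : p.length + 1 = n := by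
    rw [← Walk.length_support]; exact hsuplen
  -- the bijection
  set f : Fin n → V := fun i => p.getVert i with hf
  have hinj : Function.Injective f := by
    intro i j hij
    have := getVert_inj p hp i j (by omega) (by omega) hij
    exact Fin.ext this
  have hbij : Function.Bijective f := by
    rw [Fintype.bijective_iff_injective_and_card]
    exact ⟨hinj, by simp [hn]⟩
  set E := Equiv.ofBijective f hbij with hE
  -- all edges of G are edges of p
  have hedges : ∀ eg ∈ G.edgeSet, eg ∈ p.edges := by
    have hsub : p.edges.toFinset ⊆ G.edgeFinset := by
      intro e he
      rw [List.mem_toFinset] at he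
      exact SimpleGraph.mem_edgeFinset.mpr (p.edges_subset_edgeSet he)
    have hGcard : G.edgeFinset.card + 1 = n := SimpleGraph.IsTree.card_edgeFinset ⟨hG, hac⟩
    have hpcard : p.edges.toFinset.card = n - 1 := by
      rw [List.toFinset_card_of_nodup hp.1.edges_nodup, Walk.length_edges]
      omega
    have heq : p.edges.toFinset = G.edgeFinset :=
      Finset.eq_of_subset_of_card_le hsub (by omega)
    intro eg heg
    rw [← List.mem_toFinset, heq]
    exact SimpleGraph.mem_edgeFinset.mpr heg
  refine ⟨n, ⟨?_⟩⟩
  have hiff : ∀ i j : Fin n, (pathGraph n).Adj i j ↔ G.Adj (f i) (f j) := by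
    intro i j
    constructor
    · intro hadj
      rw [SimpleGraph.pathGraph_adj] at hadj
      rcases hadj with hadj | hadj
      · have h1 := p.adj_getVert_succ (i := (i : ℕ)) (by omega)
        rw [show (i : ℕ) + 1 = (j : ℕ) from hadj] at h1
        exact h1
      · have h1 := p.adj_getVert_succ (i := (j : ℕ)) (by omega)
        rw [show (j : ℕ) + 1 = (i : ℕ) from hadj] at h1
        exact h1.symm
    · intro hadj
      have hmem := hedges s(f i, f j) hadj
      obtain ⟨k, hk, hk2⟩ := mem_edges_getVert p _ hmem
      rw [Sym2.eq_iff] at hk2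
      have hkn : k < n := by omega
      have hkn1 : k + 1 < n := by omega
      rcases hk2 with ⟨h1, h2⟩ | ⟨h1, h2⟩
      · have e1 : i = ⟨k, hkn⟩ := hinj (by simpa [hf] using h1)
        have e2 : j = ⟨k + 1, hkn1⟩ := hinj (by simpa [hf] using h2)
        rw [SimpleGraph.pathGraph_adj, e1, e2]
        exact Or.inl rfl
      · have e1 : i = ⟨k + 1, hkn1⟩ := hinj (by simpa [hf] using h1)
        have e2 : j = ⟨k, hkn⟩ := hinj (by simpa [hf] using h2)
        rw [SimpleGraph.pathGraph_adj, e1, e2]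
        exact Or.inr rfl
  exact
    { toEquiv := E.symm
      map_rel_iff' := by
        intro a b
        have := hiff (E.symm a) (E.symm b)
        rw [this]
        have ha : f (E.symm a) = a := E.apply_symm_apply a
        have hb : f (E.symm b) = b := E.apply_symm_apply b
        rw [ha, hb] }

lemma exists_closed [Fintype V] [DecidableRel G.Adj] (hG : G.Connected)
    (hpath : ¬ IsPathGraph G) (hstar : ¬ IsExtendedStar G) :
    ∃ (e0 : OE G) (d : ℤ), 0 < d ∧ Reach G e0 e0 d := by
  classical
  by_cases hac : G.IsAcyclic
  · by_cases h3 : ∃ w, 3 ≤ G.degree w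
    · obtain ⟨w, hw⟩ := h3
      have hnu : ¬ ∃! v, 3 ≤ G.degree v := fun h => hstar ⟨⟨hG, hac⟩, h⟩
      have hex : ∃ w', 3 ≤ G.degree w' ∧ w' ≠ w := by
        by_contra hc
        push_neg at hc
        exact hnu ⟨w, hw, fun y hy => hc y hy⟩
      obtain ⟨w', hw', hne⟩ := hex
      exact exists_closed_two_branch hG hne hw' hw
    · push_neg at h3
      exact absurd (isPathGraph_aux hG hac (fun w => by have := h3 w; omega)) hpath
  · unfold SimpleGraph.IsAcyclic at hac
    push_neg at hac
    obtain ⟨v, c, hc⟩ := hac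
    exact exists_closed_of_cycle hc

end CircAux

open CircAux

/-- for a connected graph which is neither a path nor an extended star,
`G` is circularly `k`-partite iff `k` divides `χᵒ(G)`. -/
theorem stmt_4 {V : Type*} [Fintype V] (G : SimpleGraph V) [DecidableRel G.Adj]
    (hG : G.Connected) (hpath : ¬ IsPathGraph G) (hstar : ¬ IsExtendedStar G) :
    ∀ k, 1 ≤ k → (CircularlyPartite G k ↔ k ∣ chiO G) := by
  classical
  obtain ⟨e0, d, hd, hcl⟩ := exists_closed hG hpath hstar
  have hdvd_of_mem : ∀ {j : ℕ}, CircularlyPartite G j → (j : ℤ) ∣ d := by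
    rintro j ⟨hj, c, hcol⟩
    have hcc := reach_color hcol.2 hcl
    have h0 : ((d : ℤ) : ZMod j) = 0 := (left_eq_add.mp hcc)
    exact (ZMod.intCast_zmod_eq_zero_iff_dvd d j).mp h0
  have hone : CircularlyPartite G 1 :=
    ⟨one_pos, fun _ _ => 0,
      fun j => ⟨e0.1.1, e0.1.2, e0.2, Subsingleton.elim _ _⟩,
      fun _ _ _ _ _ _ => Subsingleton.elim _ _⟩
  have hbdd : BddAbove {k | CircularlyPartite G k} := by
    refine ⟨d.toNat, ?_⟩
    rintro j hj
    have hle := Int.le_of_dvd hd (hdvd_of_mem hj)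
    omega
  have hNmem : CircularlyPartite G (chiO G) := by
    have h := Nat.sSup_mem (s := {k | CircularlyPartite G k}) ⟨1, hone⟩ hbdd
    exact h
  have hNpos : 0 < chiO G := hNmem.1
  intro k hk
  constructor
  · intro hk'
    have hlcm : CircularlyPartite G (Nat.lcm k (chiO G)) := partite_lcm hk' hNmem hd hcl
    have h1 : Nat.lcm k (chiO G) ≤ chiO G := le_csSup hbdd hlcm
    have h2 : chiO G ∣ Nat.lcm k (chiO G) := Nat.dvd_lcm_right _ _
    have h3 : Nat.lcm k (chiO G) = chiO G :=
      le_antisymm h1 (Nat.le_of_dvd hlcm.1 h2)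
    have := Nat.dvd_lcm_left k (chiO G)
    rwa [h3] at this
  · intro hdvd
    obtain ⟨hpos, c, hsurj, hstep⟩ := hNmem
    haveI : NeZero k := ⟨by omega⟩
    refine ⟨by omega, fun v w => ZMod.castHom hdvd (ZMod k) (c v w), ?_, ?_⟩
    · intro j
      obtain ⟨v, w, hadj, hcvw⟩ := hsurj ((j.val : ℕ) : ZMod (chiO G))
      refine ⟨v, w, hadj, ?_⟩
      show (ZMod.castHom hdvd (ZMod k)) (c v w) = j
      rw [hcvw, map_natCast]
      exact ZMod.natCast_rightInverse j
    · intro v w z h1 h2 h3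
      show (ZMod.castHom hdvd (ZMod k)) (c w z) = (ZMod.castHom hdvd (ZMod k)) (c v w) + 1
      rw [hstep v w z h1 h2 h3, map_add, map_one]
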